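/- Let τ : 𝔻 → (0,∞) be a positive function satisfying properties (L), and let δ ∈ (0, m_τ). Then there exists a sequence of points {a_k} ⊂ 𝔻 such that: (1) a_j ∉ D(δτ(a_k)) for j ≠ k; (2) ⋃_k D(δτ(a_k)) = 𝔻; (3) D̃(δτ(a_k)) ⊂ D(3δτ(a_k)), where D̃(δτ(a_k)) = ⋃_{z ∈ D(δτ(a_k))} D(δτ(z)); (4) the family {D(3δτ(a_k))} is a covering of 𝔻 of finite multiplicity N, i.e. each point of 𝔻 lies in at most N of the disks D(3δτ(a_k)). -/

import Mathlib

open MeasureTheory Filter Set Topology ComplexConjugate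
open scoped ENNReal NNReal

noncomputable section

/-- The open unit disk in `ℂ`. -/
def UD : Set ℂ := Metric.ball 0 1

/-- The normalized area measure on `ℂ` (planar Lebesgue measure divided by `π`),
so that `UD` has measure `1`. -/
def dA : Measure ℂ := (ENNReal.ofReal (1 / Real.pi)) • (volume : Measure ℂ)

/-- The Laplacian of a function `f : ℂ → ℝ`, as the sum of the second derivatives in the
horizontal and the vertical direction. -/
def lap (f : ℂ → ℝ) (z : ℂ) : ℝ :=
  iteratedDeriv 2 (fun t : ℝ => f (z + (t : ℂ))) 0 +
    iteratedDeriv 2 (fun t : ℝ => f (z + (t : ℂ) * Complex.I)) 0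

/-- `τ = (Δφ)^{-1/2}`. -/
def tauOf (φ : ℂ → ℝ) (z : ℂ) : ℝ := (lap φ z) ^ (-(1 / 2) : ℝ)

/-- The radial profile of `τ`. -/
def tauR (φ : ℂ → ℝ) (r : ℝ) : ℝ := tauOf φ ((r : ℂ))

/-- The weight `ω = e^{-φ}`. -/
def wt (φ : ℂ → ℝ) (z : ℂ) : ℝ := Real.exp (-φ z)

/-- The radial profile of the weight `ω = e^{-φ}`. -/
def wtR (φ : ℂ → ℝ) (r : ℝ) : ℝ := wt φ ((r : ℂ))

/-- The filter of approach to the boundary of the disk: `|z| → 1⁻`. -/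
def toBdry : Filter ℂ := Filter.comap norm (nhdsWithin 1 (Set.Iio 1))

/-- The class `𝒲` of exponential type weights `ω = e^{-φ}`. -/
structure IsWeightW (φ : ℂ → ℝ) : Prop where
  smooth : ContDiffOn ℝ 2 φ UD
  radial : ∀ z ∈ UD, φ z = φ ((norm z : ℂ))
  lap_lb : ∃ c : ℝ, 0 < c ∧ ∀ z ∈ UD, c ≤ lap φ z
  tau_decr : ∀ r s : ℝ, 0 ≤ r → r ≤ s → s < 1 → tauR φ s ≤ tauR φ r
  tau_to_zero : Tendsto (tauR φ) (nhdsWithin 1 (Set.Iio 1)) (nhds 0)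
  tau_deriv_to_zero : Tendsto (deriv (tauR φ)) (nhdsWithin 1 (Set.Iio 1)) (nhds 0)
  extra : (∃ c : ℝ, 0 < c ∧
      MonotoneOn (fun r : ℝ => tauR φ r * (1 - r) ^ (-c)) (Set.Ico (0 : ℝ) 1)) ∨
    Tendsto (fun r : ℝ => deriv (tauR φ) r * Real.log (1 / tauR φ r))
      (nhdsWithin 1 (Set.Iio 1)) (nhds 0)

/-- A weight `ω = e^{-φ}` is regular: `ω(1-δt)/ω(1-t) → 0` as `t → 0⁺`, for every `0<δ<1`. -/
def IsRegularWt (φ : ℂ → ℝ) : Prop :=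
  ∀ δ : ℝ, 0 < δ → δ < 1 →
    Tendsto (fun t : ℝ => wtR φ (1 - δ * t) / wtR φ (1 - t))
      (nhdsWithin 0 (Set.Ioi 0)) (nhds 0)

/-- An analytic self-map of the unit disk. -/
def IsSelfMapD (φ₀ : ℂ → ℂ) : Prop :=
  DifferentiableOn ℂ φ₀ UD ∧ Set.MapsTo φ₀ UD UD

/-- `∫_𝔻 |f|^p ω dA` as a lower integral. -/
def apInt (p : ℝ) (φ : ℂ → ℝ) (f : ℂ → ℂ) : ℝ≥0∞ :=
  ∫⁻ z in UD, ENNReal.ofReal (norm (f z) ^ p * wt φ z) ∂dA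

/-- Membership in the weighted Bergman space `A^p(ω)`, `ω = e^{-φ}`. -/
def MemAp (p : ℝ) (φ : ℂ → ℝ) (f : ℂ → ℂ) : Prop :=
  DifferentiableOn ℂ f UD ∧ apInt p φ f < ⊤

/-- Boundedness of the composition operator `C_{φ₀}` on `A^p(ω)`. -/
def CompBoundedAp (p : ℝ) (φ : ℂ → ℝ) (φ₀ : ℂ → ℂ) : Prop :=
  ∃ C : ℝ, 0 < C ∧ ∀ f : ℂ → ℂ, DifferentiableOn ℂ f UD →
    apInt p φ (f ∘ φ₀) ≤ ENNReal.ofReal C * apInt p φ f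

/-- Boundedness of the weighted composition operator `uC_{φ₀}` on `A²(ω)`. -/
def WCompBounded (φ : ℂ → ℝ) (u φ₀ : ℂ → ℂ) : Prop :=
  ∃ C : ℝ, 0 < C ∧ ∀ f : ℂ → ℂ, DifferentiableOn ℂ f UD →
    apInt 2 φ (fun z => u z * f (φ₀ z)) ≤ ENNReal.ofReal C * apInt 2 φ f

/-- The angular-derivative type quantity `d_{φ₀}(ζ) = liminf_{z→ζ} (1-|φ₀ z|)/(1-|z|)`. -/
def angD (φ₀ : ℂ → ℂ) (ζ : ℂ) : ℝ≥0∞ :=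
  Filter.liminf
    (fun z => ENNReal.ofReal ((1 - norm (φ₀ z)) / (1 - norm z)))
    (nhdsWithin ζ UD)

/-- `K` is the reproducing kernel of `A²(ω)`: `K z` is the kernel function `K_z`. -/
structure IsBergmanKernel (φ : ℂ → ℝ) (K : ℂ → ℂ → ℂ) : Prop where
  mem : ∀ z ∈ UD, MemAp 2 φ (K z)
  herm : ∀ z ∈ UD, ∀ w ∈ UD, K z w = conj (K w z)
  pos : ∀ z ∈ UD, 0 < (K z z).re
  reproducing : ∀ f : ℂ → ℂ, MemAp 2 φ f → ∀ z ∈ UD,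
    f z = ∫ ξ in UD, f ξ * conj (K z ξ) * ((wt φ ξ : ℂ)) ∂dA

/-- The normalized reproducing kernel `k_z = K_z/‖K_z‖`, using `‖K_z‖² = K(z,z)`. -/
def normKer (φ : ℂ → ℝ) (K : ℂ → ℂ → ℂ) (z ξ : ℂ) : ℂ :=
  K z ξ / ((Real.sqrt ((K z z).re) : ℂ))

/-- The Berezin transform `μ̃(z) = ∫ |k_z|² ω dμ` of a measure `μ`. -/
def berezinM (φ : ℂ → ℝ) (K : ℂ → ℂ → ℂ) (μ : Measure ℂ) (z : ℂ) : ℝ≥0∞ :=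
  ∫⁻ ξ, ENNReal.ofReal (norm (normKer φ K z ξ) ^ 2 * wt φ ξ) ∂μ

/-- The `φ₀`-Berezin transform of `|u|²`:
`B_{φ₀}(|u|²)(z) = ∫_𝔻 |k_z(φ₀ ξ)|² |u ξ|² ω(ξ) dA(ξ)`. -/
def berezinPhi (φ : ℂ → ℝ) (K : ℂ → ℂ → ℂ) (φ₀ u : ℂ → ℂ) (z : ℂ) : ℝ≥0∞ :=
  ∫⁻ ξ in UD, ENNReal.ofReal
    (norm (normKer φ K z (φ₀ ξ)) ^ 2 * norm (u ξ) ^ 2 * wt φ ξ) ∂dA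

/-- `m_τ = min(1, C₁⁻¹, C₂⁻¹)/4`. -/
def mtau (C₁ C₂ : ℝ) : ℝ := min 1 (min C₁⁻¹ C₂⁻¹) / 4

/-- The properties `(L)` of the function `τ`, with constants `C₁, C₂`. -/
structure PropL (τ : ℂ → ℝ) (C₁ C₂ : ℝ) : Prop where
  pos : ∀ z ∈ UD, 0 < τ z
  bound : ∀ z ∈ UD, τ z ≤ C₁ * (1 - norm z)
  lip : ∀ z ∈ UD, ∀ ξ ∈ UD, |τ z - τ ξ| ≤ C₂ * norm (z - ξ)

/-- A `δ`-sequence (as in the covering lemma of Oleinik). -/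
def IsDeltaSeq (τ : ℂ → ℝ) (δ : ℝ) (a : ℕ → ℂ) : Prop :=
  (∀ k, a k ∈ UD) ∧
  (∀ j k : ℕ, j ≠ k → a j ∉ Metric.ball (a k) (δ * τ (a k))) ∧
  (⋃ k, Metric.ball (a k) (δ * τ (a k))) = UD

/-- The averaging function `μ̂_δ(z) = μ(D(δτ(z)))/|D(δτ(z))|` (normalized area). -/
def avgM (τ : ℂ → ℝ) (μ : Measure ℂ) (δ : ℝ) (z : ℂ) : ℝ≥0∞ :=
  μ (Metric.ball z (δ * τ z)) / ENNReal.ofReal ((δ * τ z) ^ 2)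

/-- `μ` is a Carleson measure for `A^p(ω)`: the embedding `A^p(ω) ⊆ L^p(ω dμ)` is bounded. -/
def IsCarleson (p : ℝ) (φ : ℂ → ℝ) (μ : Measure ℂ) : Prop :=
  ∃ C : ℝ, 0 < C ∧ ∀ f : ℂ → ℂ, DifferentiableOn ℂ f UD →
    (∫⁻ z, ENNReal.ofReal (norm (f z) ^ p * wt φ z) ∂μ) ≤
      ENNReal.ofReal C * apInt p φ f

/-- The embedding `A^p(ω) → L^p(ω dμ)` is compact: from any bounded sequence of
holomorphic functions one can extract a subsequence which is Cauchy in `L^p(ω dμ)`. -/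
def IsCompactCarleson (p : ℝ) (φ : ℂ → ℝ) (μ : Measure ℂ) : Prop :=
  ∀ f : ℕ → ℂ → ℂ, (∀ n, DifferentiableOn ℂ (f n) UD) → (∀ n, apInt p φ (f n) ≤ 1) →
    ∃ σ : ℕ → ℕ, StrictMono σ ∧ ∀ ε : ℝ, 0 < ε → ∃ N : ℕ, ∀ m ≥ N, ∀ n ≥ N,
      (∫⁻ z, ENNReal.ofReal (norm (f (σ m) z - f (σ n) z) ^ p * wt φ z) ∂μ) ≤
        ENNReal.ofReal ε

/-- The measure `ω dA` restricted to the disk. -/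
def wMeasure (φ : ℂ → ℝ) : Measure ℂ :=
  (dA.restrict UD).withDensity fun z => ENNReal.ofReal (wt φ z)

/-- The Bergman space `A²(ω)` as a submodule of `L²(ω dA)`. -/
def bergmanSubmodule (φ : ℂ → ℝ) : Submodule ℂ (Lp ℂ 2 (wMeasure φ)) where
  carrier := {f | ∃ g : ℂ → ℂ, DifferentiableOn ℂ g UD ∧ ⇑f =ᵐ[wMeasure φ] g}
  add_mem' := by
    rintro f₁ f₂ ⟨g₁, hg₁, e₁⟩ ⟨g₂, hg₂, e₂⟩
    exact ⟨g₁ + g₂, hg₁.add hg₂, (Lp.coeFn_add f₁ f₂).trans (e₁.add e₂)⟩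
  zero_mem' := ⟨0, differentiableOn_const 0, Lp.coeFn_zero ℂ 2 _⟩
  smul_mem' := by
    rintro c f ⟨g, hg, e⟩
    exact ⟨c • g, hg.const_smul c, (Lp.coeFn_smul c f).trans (e.const_smul c)⟩

/-- The Bergman space `A²(ω)`, as a (pre-)Hilbert space. -/
abbrev BergSp (φ : ℂ → ℝ) := ↥(bergmanSubmodule φ)

/-- `T` represents the weighted composition operator `uC_{φ₀}` on `A²(ω)`. -/
def RepWComp (φ : ℂ → ℝ) (u φ₀ : ℂ → ℂ) (T : BergSp φ →L[ℂ] BergSp φ) : Prop :=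
  ∀ (f : BergSp φ) (g : ℂ → ℂ), DifferentiableOn ℂ g UD →
    ⇑(f : Lp ℂ 2 (wMeasure φ)) =ᵐ[wMeasure φ] g →
    ⇑(T f : Lp ℂ 2 (wMeasure φ)) =ᵐ[wMeasure φ] fun z => u z * g (φ₀ z)

/-- The essential norm of an operator: the distance to the compact operators. -/
def essNorm {H : Type} [NormedAddCommGroup H] [NormedSpace ℂ H] (T : H →L[ℂ] H) : ℝ :=
  sInf ((fun S : H →L[ℂ] H => ‖T - S‖) '' {S | IsCompactOperator ⇑S})

/-- Membership in the Schatten class `S_p`: `T` admits a singular value decomposition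
`T x = ∑ sₙ ⟨x, eₙ⟩ fₙ` with `(sₙ) ∈ ℓ^p`. -/
def MemSchatten (p : ℝ) {H : Type} [NormedAddCommGroup H] [InnerProductSpace ℂ H]
    (T : H →L[ℂ] H) : Prop :=
  ∃ (e f : ℕ → H) (s : ℕ → ℝ), Orthonormal ℂ e ∧ Orthonormal ℂ f ∧ (∀ n, 0 ≤ s n) ∧
    Summable (fun n => s n ^ p) ∧
    ∀ x : H, T x = ∑' n, (s n : ℂ) • ((inner ℂ (e n) x : ℂ) • f n)

/-- The Toeplitz-type integral operator `T_μ f(z) = ∫ f(ξ) K(z,ξ) ω(ξ) dμ(ξ)`. -/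
def toeplitzFun (φ : ℂ → ℝ) (K : ℂ → ℂ → ℂ) (μ : Measure ℂ) (f : ℂ → ℂ) (z : ℂ) : ℂ :=
  ∫ ξ, f ξ * conj (K z ξ) * ((wt φ ξ : ℂ)) ∂μ

/-- `T` represents the Toeplitz operator `T_μ` on `A²(ω)`. -/
def RepToeplitz (φ : ℂ → ℝ) (K : ℂ → ℂ → ℂ) (μ : Measure ℂ)
    (T : BergSp φ →L[ℂ] BergSp φ) : Prop :=
  ∀ (f : BergSp φ) (g : ℂ → ℂ), DifferentiableOn ℂ g UD →
    ⇑(f : Lp ℂ 2 (wMeasure φ)) =ᵐ[wMeasure φ] g →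
    ⇑(T f : Lp ℂ 2 (wMeasure φ)) =ᵐ[wMeasure φ] toeplitzFun φ K μ g

/-- The pullback measure `dμ^{φ₀}_{ω,u} = ω⁻¹ d((|u|²ω dA) ∘ φ₀⁻¹)`. -/
def pullbackM (φ : ℂ → ℝ) (u φ₀ : ℂ → ℂ) : Measure ℂ :=
  (Measure.map φ₀ ((dA.restrict UD).withDensity
      fun z => ENNReal.ofReal (norm (u z) ^ 2 * wt φ z))).withDensity
    fun z => ENNReal.ofReal (wt φ z)⁻¹

/-- The square of the operator norm of `uC_{φ₀}` on `A²(ω)`, as a supremum of ratios. -/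
def wcompNormSq (φ : ℂ → ℝ) (u φ₀ : ℂ → ℂ) : ℝ≥0∞ :=
  ⨆ f : {f : ℂ → ℂ // DifferentiableOn ℂ f UD},
    apInt 2 φ (fun z => u z * f.1 (φ₀ z)) / apInt 2 φ f.1

/-- `M_{φ₀}(r) = sup_θ |φ₀(r e^{iθ})|`. -/
def Mrad (φ₀ : ℂ → ℂ) (r : ℝ) : ℝ :=
  ⨆ θ : ℝ, norm (φ₀ ((r : ℂ) * Complex.exp ((θ : ℂ) * Complex.I)))

/-- `φ` is subharmonic on the disk: upper semicontinuous and satisfying the sub-mean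
value inequality on circles. -/
def SubharmonicOnD (φ : ℂ → ℝ) : Prop :=
  UpperSemicontinuousOn φ UD ∧
  ∀ z ∈ UD, ∀ r : ℝ, 0 < r → Metric.closedBall z r ⊆ UD →
    φ z ≤ (1 / (2 * Real.pi)) *
      ∫ θ in (0 : ℝ)..(2 * Real.pi), φ (z + (r : ℂ) * Complex.exp ((θ : ℂ) * Complex.I))

end

namespace S19

open Metric

/-- A set of indices whose points lie in a bounded region and are pairwise
`ε`-separated is finite. -/
lemma finite_of_separated {s : Set ℕ} {a : ℕ → ℂ} {c : ℂ} {R ε : ℝ} (hε : 0 < ε)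
    (hb : ∀ k ∈ s, a k ∈ Metric.closedBall c R)
    (hsep : ∀ j ∈ s, ∀ k ∈ s, j ≠ k → ε ≤ dist (a j) (a k)) : s.Finite := by
  by_contra hs
  have hs' : s.Infinite := hs
  set e := hs'.natEmbedding with he
  have hmem : ∀ n : ℕ, a ((e n : ℕ)) ∈ Metric.closedBall c R := fun n => hb _ (e n).2
  obtain ⟨x, -, φ, hφ, hlim⟩ := (isCompact_closedBall c R).tendsto_subseq hmem
  rw [Metric.tendsto_atTop] at hlim
  obtain ⟨N, hN⟩ := hlim (ε / 2) (by linarith)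
  have h1 := hN N le_rfl
  have h2 := hN (N + 1) (Nat.le_succ N)
  simp only [Function.comp_apply] at h1 h2
  have hne : ((e (φ N) : ℕ)) ≠ ((e (φ (N + 1)) : ℕ)) := by
    intro h
    have : e (φ N) = e (φ (N + 1)) := Subtype.ext h
    have : φ N = φ (N + 1) := e.injective this
    exact absurd this (Nat.ne_of_lt (hφ (Nat.lt_succ_self N)))
  have := hsep _ (e (φ N)).2 _ (e (φ (N + 1)) : _).2 hne
  have htri : dist (a (e (φ N) : ℕ)) (a (e (φ (N + 1)) : ℕ)) ≤
      dist (a (e (φ N) : ℕ)) x + dist x (a (e (φ (N + 1)) : ℕ)) := dist_triangle _ _ _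
  rw [dist_comm x] at htri
  linarith

variable (τ : ℂ → ℝ) (δ : ℝ)

/-- The union of the balls centered at the points of the list `l`. -/
def Ul (l : List ℂ) : Set ℂ := ⋃ b ∈ l, Metric.ball b (δ * τ b)

/-- The defining property of the next chosen point. -/
def PickP (l : List ℂ) (w : ℂ) : Prop :=
  w ∈ UD ∧ w ∉ Ul τ δ l ∧ ∀ v ∈ UD, v ∉ Ul τ δ l → τ v ≤ τ w

open Classical in
noncomputable def pick (l : List ℂ) : ℂ :=
  if h : ∃ w, PickP τ δ l w then h.choose else 0

noncomputable def glist : ℕ → List ℂ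
  | 0 => []
  | n + 1 => glist n ++ [pick τ δ (glist n)]

noncomputable def aseq (n : ℕ) : ℂ := pick τ δ (glist τ δ n)

lemma isOpen_Ul (l : List ℂ) : IsOpen (Ul τ δ l) :=
  isOpen_biUnion fun _ _ => Metric.isOpen_ball

lemma Ul_mono {l₁ l₂ : List ℂ} (h : ∀ b ∈ l₁, b ∈ l₂) : Ul τ δ l₁ ⊆ Ul τ δ l₂ := by
  intro x hx
  simp only [Ul, Set.mem_iUnion] at hx ⊢
  obtain ⟨b, hb, hxb⟩ := hx
  exact ⟨b, h b hb, hxb⟩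

variable {C₁ C₂ : ℝ}

lemma continuousOn_tau (hC₂ : 0 < C₂) (hL : PropL τ C₁ C₂) : ContinuousOn τ UD := by
  intro z hz
  rw [Metric.continuousWithinAt_iff]
  intro ε hε
  refine ⟨ε / C₂, by positivity, fun y hy hyz => ?_⟩
  have := hL.lip y hy z hz
  rw [Real.dist_eq]
  calc |τ y - τ z| ≤ C₂ * ‖y - z‖ := this
    _ < C₂ * (ε / C₂) := by
        apply mul_lt_mul_of_pos_left _ hC₂
        rwa [Complex.dist_eq] at hyz
    _ = ε := by field_simp

lemma tau_ball_le (hδ₁ : 0 < δ) (hδC₁ : δ * C₁ ≤ 1 / 4) (hL : PropL τ C₁ C₂)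
    {z : ℂ} (hz : z ∈ UD) : δ * τ z ≤ (1 - ‖z‖) / 4 := by
  have h1 : δ * τ z ≤ δ * (C₁ * (1 - ‖z‖)) :=
    mul_le_mul_of_nonneg_left (hL.bound z hz) hδ₁.le
  have habs : ‖z‖ < 1 := by
    rw [UD, Metric.mem_ball, Complex.dist_eq, sub_zero] at hz; exact hz
  nlinarith [hL.pos z hz]

lemma ball_sub_UD (hδ₁ : 0 < δ) (hδC₁ : δ * C₁ ≤ 1 / 4) (hL : PropL τ C₁ C₂)
    {z : ℂ} (hz : z ∈ UD) : Metric.ball z (δ * τ z) ⊆ UD := by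
  intro w hw
  rw [Metric.mem_ball, Complex.dist_eq] at hw
  have h1 : δ * τ z ≤ (1 - ‖z‖) / 4 := tau_ball_le τ δ hδ₁ hδC₁ hL hz
  have h2 : ‖w‖ ≤ ‖z‖ + ‖w - z‖ := by
    have := norm_add_le z (w - z)
    simpa using this
  have habs : ‖z‖ < 1 := by
    rw [UD, Metric.mem_ball, Complex.dist_eq, sub_zero] at hz; exact hz
  rw [UD, Metric.mem_ball, Complex.dist_eq, sub_zero]
  linarith

lemma pick_exists (hC₁ : 0 < C₁) (hC₂ : 0 < C₂) (hL : PropL τ C₁ C₂)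
    (hδ₁ : 0 < δ) (hδC₁ : δ * C₁ ≤ 1 / 4)
    (l : List ℂ) (hl : ∀ b ∈ l, b ∈ UD) : ∃ w, PickP τ δ l w := by
  -- a bound on the list
  have hrex : ∃ r : ℝ, 0 ≤ r ∧ r < 1 ∧ ∀ b ∈ l, ‖b‖ + δ * τ b ≤ r := by
    induction l with
    | nil => exact ⟨0, le_rfl, by norm_num, by simp⟩
    | cons b t ih =>
        obtain ⟨r, hr0, hr1, hrb⟩ := ih (fun x hx => hl x (List.mem_cons_of_mem b hx))
        have hbU : b ∈ UD := hl b List.mem_cons_self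
        have habs : ‖b‖ < 1 := by
          rw [UD, Metric.mem_ball, Complex.dist_eq, sub_zero] at hbU; exact hbU
        have hb1 : ‖b‖ + δ * τ b < 1 := by
          have := tau_ball_le τ δ hδ₁ hδC₁ hL hbU
          linarith
        refine ⟨max r (‖b‖ + δ * τ b), le_trans hr0 (le_max_left _ _),
          max_lt hr1 hb1, ?_⟩
        intro c hc
        rcases List.mem_cons.mp hc with h | h
        · subst h; exact le_max_right _ _
        · exact le_trans (hrb c h) (le_max_left _ _)
  obtain ⟨r, hr0, hr1, hrb⟩ := hrex
  -- the witness point outside all the balls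
  set w₀ : ℂ := (((r + 1) / 2 : ℝ) : ℂ) with hw₀
  have habsw₀ : ‖w₀‖ = (r + 1) / 2 := by
    rw [hw₀, Complex.norm_real, Real.norm_eq_abs, abs_of_nonneg (by linarith)]
  have hw₀U : w₀ ∈ UD := by
    rw [UD, Metric.mem_ball, Complex.dist_eq, sub_zero, habsw₀]; linarith
  have hw₀n : w₀ ∉ Ul τ δ l := by
    intro hmem
    simp only [Ul, Set.mem_iUnion] at hmem
    obtain ⟨b, hb, hball⟩ := hmem
    rw [Metric.mem_ball, Complex.dist_eq] at hball
    have h2 : ‖w₀‖ - ‖b‖ ≤ ‖w₀ - b‖ := by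
      exact norm_sub_norm_le w₀ b
    have := hrb b hb
    rw [habsw₀] at h2
    linarith
  have hτw₀ : 0 < τ w₀ := hL.pos w₀ hw₀U
  -- the compact region
  set c : ℝ := max (1 - τ w₀ / C₁) ((r + 1) / 2) with hc
  have hc1 : c < 1 := by
    apply max_lt
    · have : 0 < τ w₀ / C₁ := by positivity
      linarith
    · linarith
  set K : Set ℂ := Metric.closedBall 0 c ∩ (Ul τ δ l)ᶜ with hK
  have hKcpt : IsCompact K :=
    (isCompact_closedBall 0 c).inter_right (isOpen_Ul τ δ l).isClosed_compl
  have hKU : K ⊆ UD := by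
    intro x hx
    have := hx.1
    rw [Metric.mem_closedBall, Complex.dist_eq, sub_zero] at this
    rw [UD, Metric.mem_ball, Complex.dist_eq, sub_zero]
    linarith
  have hw₀K : w₀ ∈ K := by
    constructor
    · rw [Metric.mem_closedBall, Complex.dist_eq, sub_zero, habsw₀]
      exact le_max_right _ _
    · exact hw₀n
  obtain ⟨w, hwK, hwmax⟩ := hKcpt.exists_isMaxOn ⟨w₀, hw₀K⟩
    ((continuousOn_tau τ hC₂ hL).mono hKU)
  refine ⟨w, hKU hwK, hwK.2, fun v hv hvn => ?_⟩
  by_cases hvc : ‖v‖ ≤ c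
  · exact hwmax (Set.mem_inter (by rwa [Metric.mem_closedBall, Complex.dist_eq, sub_zero]) hvn)
  · push_neg at hvc
    have h1 : τ v ≤ C₁ * (1 - ‖v‖) := hL.bound v hv
    have h2 : 1 - τ w₀ / C₁ ≤ c := le_max_left _ _
    have h3 : C₁ * (1 - ‖v‖) < C₁ * (τ w₀ / C₁) := by
      apply mul_lt_mul_of_pos_left _ hC₁
      linarith
    have h4 : C₁ * (τ w₀ / C₁) = τ w₀ := by field_simp
    have h5 : τ w₀ ≤ τ w := hwmax hw₀K
    linarith

lemma pick_spec (hC₁ : 0 < C₁) (hC₂ : 0 < C₂) (hL : PropL τ C₁ C₂)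
    (hδ₁ : 0 < δ) (hδC₁ : δ * C₁ ≤ 1 / 4)
    (l : List ℂ) (hl : ∀ b ∈ l, b ∈ UD) : PickP τ δ l (pick τ δ l) := by
  have h := pick_exists τ δ hC₁ hC₂ hL hδ₁ hδC₁ l hl
  rw [pick, dif_pos h]
  exact h.choose_spec

lemma glist_mem_UD (hC₁ : 0 < C₁) (hC₂ : 0 < C₂) (hL : PropL τ C₁ C₂)
    (hδ₁ : 0 < δ) (hδC₁ : δ * C₁ ≤ 1 / 4) :
    ∀ n, ∀ b ∈ glist τ δ n, b ∈ UD := by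
  intro n
  induction n with
  | zero => simp [glist]
  | succ n ih =>
      intro b hb
      rw [glist, List.mem_append] at hb
      rcases hb with h | h
      · exact ih b h
      · rw [List.mem_singleton] at h
        subst h
        exact (pick_spec τ δ hC₁ hC₂ hL hδ₁ hδC₁ _ ih).1

lemma mem_glist_iff (n : ℕ) (b : ℂ) :
    b ∈ glist τ δ n ↔ ∃ m < n, aseq τ δ m = b := by
  induction n with
  | zero => simp [glist]
  | succ n ih =>
      rw [glist, List.mem_append, List.mem_singleton, ih]
      constructor
      · rintro (⟨m, hm, hb⟩ | h)
        · exact ⟨m, Nat.lt_succ_of_lt hm, hb⟩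
        · exact ⟨n, Nat.lt_succ_self n, h.symm⟩
      · rintro ⟨m, hm, hb⟩
        rcases Nat.lt_succ_iff_lt_or_eq.mp hm with h | h
        · exact Or.inl ⟨m, h, hb⟩
        · subst h; exact Or.inr hb.symm

lemma aseq_mem_glist {m n : ℕ} (h : m < n) : aseq τ δ m ∈ glist τ δ n :=
  (mem_glist_iff τ δ n _).mpr ⟨m, h, rfl⟩

section Props

variable (hC₁ : 0 < C₁) (hC₂ : 0 < C₂) (hL : PropL τ C₁ C₂)
  (hδ₁ : 0 < δ) (hδC₁ : δ * C₁ ≤ 1 / 4)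

include hC₁ hC₂ hL hδ₁ hδC₁

lemma aseq_spec (n : ℕ) : PickP τ δ (glist τ δ n) (aseq τ δ n) :=
  pick_spec τ δ hC₁ hC₂ hL hδ₁ hδC₁ _ (glist_mem_UD τ δ hC₁ hC₂ hL hδ₁ hδC₁ n)

lemma aseq_mem_UD (n : ℕ) : aseq τ δ n ∈ UD :=
  (aseq_spec τ δ hC₁ hC₂ hL hδ₁ hδC₁ n).1

lemma sep_lt {m n : ℕ} (h : m < n) :
    δ * τ (aseq τ δ m) ≤ dist (aseq τ δ n) (aseq τ δ m) := by
  have hn := (aseq_spec τ δ hC₁ hC₂ hL hδ₁ hδC₁ n).2.1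
  by_contra hcon
  push_neg at hcon
  apply hn
  simp only [Ul, Set.mem_iUnion]
  exact ⟨aseq τ δ m, aseq_mem_glist τ δ h, by rwa [Metric.mem_ball]⟩

lemma tau_anti {m n : ℕ} (h : m ≤ n) : τ (aseq τ δ n) ≤ τ (aseq τ δ m) := by
  rcases eq_or_lt_of_le h with rfl | h
  · exact le_rfl
  · have hn := aseq_spec τ δ hC₁ hC₂ hL hδ₁ hδC₁ n
    have hm := aseq_spec τ δ hC₁ hC₂ hL hδ₁ hδC₁ m
    apply hm.2.2 _ hn.1
    intro hmem
    exact hn.2.1 (Ul_mono τ δ (fun b hb => by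
      rw [mem_glist_iff] at hb ⊢
      obtain ⟨j, hj, hb⟩ := hb
      exact ⟨j, lt_trans hj h, hb⟩) hmem)

lemma aseq_sep {j k : ℕ} (h : j ≠ k) :
    aseq τ δ j ∉ Metric.ball (aseq τ δ k) (δ * τ (aseq τ δ k)) := by
  rw [Metric.mem_ball]
  push_neg
  rcases lt_or_gt_of_ne h with hlt | hlt
  · calc δ * τ (aseq τ δ k) ≤ δ * τ (aseq τ δ j) :=
          mul_le_mul_of_nonneg_left (tau_anti τ δ hC₁ hC₂ hL hδ₁ hδC₁ hlt.le) hδ₁.le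
      _ ≤ dist (aseq τ δ k) (aseq τ δ j) := sep_lt τ δ hC₁ hC₂ hL hδ₁ hδC₁ hlt
      _ = dist (aseq τ δ j) (aseq τ δ k) := dist_comm _ _
  · exact sep_lt τ δ hC₁ hC₂ hL hδ₁ hδC₁ hlt

lemma aseq_cover :
    (⋃ k, Metric.ball (aseq τ δ k) (δ * τ (aseq τ δ k))) = UD := by
  apply Set.Subset.antisymm
  · apply Set.iUnion_subset
    intro k
    exact ball_sub_UD τ δ hδ₁ hδC₁ hL (aseq_mem_UD τ δ hC₁ hC₂ hL hδ₁ hδC₁ k)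
  · intro z hz
    by_contra hzn
    simp only [Set.mem_iUnion, not_exists] at hzn
    have hzUl : ∀ n, z ∉ Ul τ δ (glist τ δ n) := by
      intro n hmem
      simp only [Ul, Set.mem_iUnion] at hmem
      obtain ⟨b, hb, hball⟩ := hmem
      rw [mem_glist_iff] at hb
      obtain ⟨m, _, rfl⟩ := hb
      exact hzn m hball
    have hτz : 0 < τ z := hL.pos z hz
    have hτ : ∀ n, τ z ≤ τ (aseq τ δ n) := fun n =>
      (aseq_spec τ δ hC₁ hC₂ hL hδ₁ hδC₁ n).2.2 z hz (hzUl n)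
    have : (Set.univ : Set ℕ).Finite := by
      apply finite_of_separated (c := 0) (R := 1) (ε := δ * τ z) (by positivity)
      · intro k _
        rw [Metric.mem_closedBall]
        have := aseq_mem_UD τ δ hC₁ hC₂ hL hδ₁ hδC₁ k
        rw [UD, Metric.mem_ball] at this
        exact this.le
      · intro j _ k _ hjk
        have := aseq_sep τ δ hC₁ hC₂ hL hδ₁ hδC₁ hjk
        rw [Metric.mem_ball] at this
        push_neg at this
        calc δ * τ z ≤ δ * τ (aseq τ δ k) :=
              mul_le_mul_of_nonneg_left (hτ k) hδ₁.le
          _ ≤ dist (aseq τ δ j) (aseq τ δ k) := this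
    exact Set.infinite_univ this

end Props

end S19


theorem stmt19 (τ : ℂ → ℝ) (C₁ C₂ δ : ℝ) (hC₁ : 0 < C₁) (hC₂ : 0 < C₂)
    (hL : PropL τ C₁ C₂) (hδ₁ : 0 < δ) (hδ₂ : δ < mtau C₁ C₂) :
    ∃ a : ℕ → ℂ, (∀ k, a k ∈ UD) ∧
      (∀ j k : ℕ, j ≠ k → a j ∉ Metric.ball (a k) (δ * τ (a k))) ∧
      (⋃ k, Metric.ball (a k) (δ * τ (a k))) = UD ∧
      (∀ k, (⋃ z ∈ Metric.ball (a k) (δ * τ (a k)), Metric.ball z (δ * τ z)) ⊆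
        Metric.ball (a k) (3 * δ * τ (a k))) ∧
      ∃ N : ℕ, ∀ z ∈ UD,
        {k : ℕ | z ∈ Metric.ball (a k) (3 * δ * τ (a k))}.Finite ∧
        ({k : ℕ | z ∈ Metric.ball (a k) (3 * δ * τ (a k))}).ncard ≤ N := by
  have hC₁' : C₁ ≠ 0 := hC₁.ne'
  have hC₂' : C₂ ≠ 0 := hC₂.ne'
  rw [mtau] at hδ₂
  have hmin1 : min 1 (min C₁⁻¹ C₂⁻¹) ≤ C₁⁻¹ := le_trans (min_le_right _ _) (min_le_left _ _)
  have hmin2 : min 1 (min C₁⁻¹ C₂⁻¹) ≤ C₂⁻¹ := le_trans (min_le_right _ _) (min_le_right _ _)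
  have hδC₁ : δ * C₁ ≤ 1 / 4 := by
    calc δ * C₁ ≤ C₁⁻¹ / 4 * C₁ :=
          mul_le_mul_of_nonneg_right (by linarith) hC₁.le
      _ = 1 / 4 := by field_simp
  have hδC₂ : δ * C₂ ≤ 1 / 4 := by
    calc δ * C₂ ≤ C₂⁻¹ / 4 * C₂ :=
          mul_le_mul_of_nonneg_right (by linarith) hC₂.le
      _ = 1 / 4 := by field_simp
  refine ⟨S19.aseq τ δ, fun k => S19.aseq_mem_UD τ δ hC₁ hC₂ hL hδ₁ hδC₁ k,
    fun j k h => S19.aseq_sep τ δ hC₁ hC₂ hL hδ₁ hδC₁ h,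
    S19.aseq_cover τ δ hC₁ hC₂ hL hδ₁ hδC₁, ?_, ?_⟩
  · -- property (3)
    intro k w hw
    simp only [Set.mem_iUnion, exists_prop] at hw
    obtain ⟨z, hz, hwz⟩ := hw
    set a := S19.aseq τ δ k with ha
    have haU : a ∈ UD := S19.aseq_mem_UD τ δ hC₁ hC₂ hL hδ₁ hδC₁ k
    have hτa : 0 < τ a := hL.pos a haU
    have hzU : z ∈ UD := S19.ball_sub_UD τ δ hδ₁ hδC₁ hL haU hz
    rw [Metric.mem_ball] at hz hwz ⊢
    have hlip := hL.lip z hzU a haU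
    rw [← Complex.dist_eq] at hlip
    have h1 : τ z - τ a ≤ C₂ * dist z a := le_trans (le_abs_self _) hlip
    have h2 : δ * (τ z - τ a) ≤ δ * (C₂ * dist z a) :=
      mul_le_mul_of_nonneg_left h1 hδ₁.le
    have h3 : δ * C₂ * dist z a ≤ δ * C₂ * (δ * τ a) :=
      mul_le_mul_of_nonneg_left hz.le (by positivity)
    have h4 : δ * C₂ * (δ * τ a) ≤ 1 / 4 * (δ * τ a) :=
      mul_le_mul_of_nonneg_right hδC₂ (by positivity)
    have h5 : dist w a ≤ dist w z + dist z a := dist_triangle _ _ _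
    nlinarith [mul_pos hδ₁ hτa]
  · -- property (4)
    refine ⟨1849, fun z hz => ?_⟩
    have hτz : 0 < τ z := hL.pos z hz
    set d := δ * τ z with hdd
    have hd : 0 < d := by positivity
    set S := {k : ℕ | z ∈ Metric.ball (S19.aseq τ δ k) (3 * δ * τ (S19.aseq τ δ k))} with hS
    have hdk : ∀ k ∈ S, dist z (S19.aseq τ δ k) < 3 * δ * τ (S19.aseq τ δ k) := by
      intro k hk
      rw [hS, Set.mem_setOf_eq, Metric.mem_ball] at hk
      exact hk
    have hτk : ∀ k ∈ S, τ (S19.aseq τ δ k) ≤ 4 * τ z ∧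
        4 / 7 * τ z ≤ τ (S19.aseq τ δ k) := by
      intro k hk
      have hak : S19.aseq τ δ k ∈ UD := S19.aseq_mem_UD τ δ hC₁ hC₂ hL hδ₁ hδC₁ k
      have hτa : 0 < τ (S19.aseq τ δ k) := hL.pos _ hak
      have hlip := hL.lip z hz (S19.aseq τ δ k) hak
      rw [← Complex.dist_eq] at hlip
      have h1 : C₂ * dist z (S19.aseq τ δ k) ≤ C₂ * (3 * δ * τ (S19.aseq τ δ k)) :=
        mul_le_mul_of_nonneg_left (hdk k hk).le hC₂.le
      have h2 : C₂ * (3 * δ * τ (S19.aseq τ δ k)) ≤ 3 / 4 * τ (S19.aseq τ δ k) := by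
        nlinarith
      rw [abs_sub_le_iff] at hlip
      constructor <;> linarith [hlip.1, hlip.2]
    have hmemB : ∀ k ∈ S, S19.aseq τ δ k ∈ Metric.closedBall z (12 * d) := by
      intro k hk
      rw [Metric.mem_closedBall, dist_comm]
      have h1 := hdk k hk
      have h2 := (hτk k hk).1
      have h3 : 3 * δ * τ (S19.aseq τ δ k) ≤ 3 * δ * (4 * τ z) :=
        mul_le_mul_of_nonneg_left h2 (by positivity)
      rw [hdd]
      nlinarith
    have hsep : ∀ j ∈ S, ∀ k ∈ S, j ≠ k →
        4 / 7 * d ≤ dist (S19.aseq τ δ j) (S19.aseq τ δ k) := by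
      intro j _ k hk hjk
      have h1 := S19.aseq_sep τ δ hC₁ hC₂ hL hδ₁ hδC₁ hjk
      rw [Metric.mem_ball] at h1
      push_neg at h1
      have h2 : 4 / 7 * d ≤ δ * τ (S19.aseq τ δ k) := by
        have := (hτk k hk).2
        rw [hdd]
        nlinarith
      linarith
    have hfin : S.Finite := S19.finite_of_separated (by positivity : (0:ℝ) < 4 / 7 * d)
      hmemB hsep
    refine ⟨hfin, ?_⟩
    rw [Set.ncard_eq_toFinset_card _ hfin]
    set F := hfin.toFinset with hF
    have hdisj : (↑F : Set ℕ).PairwiseDisjoint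
        (fun k => Metric.ball (S19.aseq τ δ k) (2 / 7 * d)) := by
      intro j hj k hk hjk
      apply Metric.ball_disjoint_ball
      have := hsep j (hfin.mem_toFinset.mp (Finset.mem_coe.mp hj))
        k (hfin.mem_toFinset.mp (Finset.mem_coe.mp hk)) hjk
      linarith
    have hsub : ∀ k ∈ F, Metric.ball (S19.aseq τ δ k) (2 / 7 * d) ⊆
        Metric.ball z (86 / 7 * d) := by
      intro k hk
      apply Metric.ball_subset_ball'
      have := hmemB k (hfin.mem_toFinset.mp hk)
      rw [Metric.mem_closedBall] at this
      linarith
    have hmeas := MeasureTheory.measure_biUnion_finset hdisj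
      (fun k _ => measurableSet_ball) (μ := MeasureTheory.volume)
    have hle : ∑ k ∈ F, MeasureTheory.volume (Metric.ball (S19.aseq τ δ k) (2 / 7 * d)) ≤
        MeasureTheory.volume (Metric.ball z (86 / 7 * d)) := by
      rw [← hmeas]
      exact MeasureTheory.measure_mono (Set.iUnion₂_subset hsub)
    simp only [Complex.volume_ball, Finset.sum_const, nsmul_eq_mul] at hle
    have hπ0 : ((NNReal.pi : ℝ≥0∞)) ≠ 0 := by
      simp only [ne_eq, ENNReal.coe_eq_zero]
      exact NNReal.pi_ne_zero
    have hπt : ((NNReal.pi : ℝ≥0∞)) ≠ ⊤ := ENNReal.coe_ne_top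
    rw [← mul_assoc, ENNReal.mul_le_mul_iff_left hπ0 hπt] at hle
    rw [← ENNReal.ofReal_pow (by positivity), ← ENNReal.ofReal_pow (by positivity)] at hle
    have hkey : (86 / 7 * d) ^ 2 = 1849 * ((2 / 7 * d) ^ 2) := by ring
    rw [hkey, ENNReal.ofReal_mul (by norm_num)] at hle
    have hA0 : ENNReal.ofReal ((2 / 7 * d) ^ 2) ≠ 0 := by
      simp only [ne_eq, ENNReal.ofReal_eq_zero, not_le]
      positivity
    have hAt : ENNReal.ofReal ((2 / 7 * d) ^ 2) ≠ ⊤ := ENNReal.ofReal_ne_top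
    rw [ENNReal.mul_le_mul_iff_left hA0 hAt] at hle
    have h1849 : ENNReal.ofReal (1849 : ℝ) = ((1849 : ℕ) : ℝ≥0∞) := by
      rw [show (1849 : ℝ) = ((1849 : ℕ) : ℝ) by norm_num, ENNReal.ofReal_natCast]
    rw [h1849] at hle
    exact_mod_cast hle
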